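/- Let Δ ∈ ℂ and let e₃, e₄ ∈ ℂ be nonzero and such that all denominators in the n=4 bound-pair Bethe equations are nonzero both at (e₃,e₄) and at (1/e₃, 1/e₄). If (e₃,e₄) satisfies both n=4 bound-pair Bethe equations, then (1/e₃, 1/e₄) also satisfies both equations. -/

import Mathlib

/-- The bound-pair Bethe equation for the unknown `x`, paired with `y`, in the `n = 4`
block of the zero-field six-vertex model with `N` columns. -/
def betheEq4 (N : ℕ) (Δ x y : ℂ) : Prop :=
  x ^ (N - 1) =
    -((1 - 2*Δ*x) / (x - 2*Δ)) * ((1 - 2*Δ*x + x*y) / (1 - 2*Δ*y + x*y))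

lemma betheEq4_inv (N : ℕ) (Δ x y : ℂ)
    (hx : x ≠ 0) (hy : y ≠ 0)
    (d₁ : x - 2*Δ ≠ 0)
    (d₃ : 1 - 2*Δ*y + x*y ≠ 0) (d₄ : 1 - 2*Δ*x + x*y ≠ 0)
    (d₁' : 1/x - 2*Δ ≠ 0)
    (d₃' : 1 - 2*Δ*(1/y) + (1/x)*(1/y) ≠ 0)
    (heq : betheEq4 N Δ x y) : betheEq4 N Δ (1/x) (1/y) := by
  have n₁ : (1:ℂ) - 2*Δ*x ≠ 0 := by
    have h := mul_ne_zero d₁' hx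
    rwa [show (1/x - 2*Δ)*x = 1 - 2*Δ*x by field_simp] at h
  unfold betheEq4 at heq ⊢
  have hA : (1 - 2*Δ*(1/x))/(1/x - 2*Δ) = (x - 2*Δ)/(1 - 2*Δ*x) := by
    rw [div_eq_div_iff d₁' n₁]; field_simp
  have hB : (1 - 2*Δ*(1/x) + (1/x)*(1/y))/(1 - 2*Δ*(1/y) + (1/x)*(1/y))
      = (1 - 2*Δ*y + x*y)/(1 - 2*Δ*x + x*y) := by
    rw [div_eq_div_iff d₃' d₄]; field_simp; ring
  rw [hA, hB, one_div, inv_pow, heq, neg_mul, inv_neg, div_mul_div_comm, inv_div,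
    neg_mul, div_mul_div_comm]

/-- If `(e₃, e₄)` solves the two `n = 4` bound-pair Bethe equations (all denominators
nonzero at `(e₃,e₄)` and at `(1/e₃, 1/e₄)`), then so does `(1/e₃, 1/e₄)`. -/
theorem n4_bethe_inversion (N : ℕ) (hN : 0 < N) (hNeven : Even N) (Δ e₃ e₄ : ℂ)
    (h₃ : e₃ ≠ 0) (h₄ : e₄ ≠ 0)
    (d₁ : e₃ - 2*Δ ≠ 0) (d₂ : e₄ - 2*Δ ≠ 0)
    (d₃ : 1 - 2*Δ*e₄ + e₃*e₄ ≠ 0) (d₄ : 1 - 2*Δ*e₃ + e₃*e₄ ≠ 0)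
    (d₁' : 1/e₃ - 2*Δ ≠ 0) (d₂' : 1/e₄ - 2*Δ ≠ 0)
    (d₃' : 1 - 2*Δ*(1/e₄) + (1/e₃)*(1/e₄) ≠ 0)
    (d₄' : 1 - 2*Δ*(1/e₃) + (1/e₃)*(1/e₄) ≠ 0)
    (heq₃ : betheEq4 N Δ e₃ e₄) (heq₄ : betheEq4 N Δ e₄ e₃) :
    betheEq4 N Δ (1/e₃) (1/e₄) ∧ betheEq4 N Δ (1/e₄) (1/e₃) := by
  constructor
  · exact betheEq4_inv N Δ e₃ e₄ h₃ h₄ d₁ d₃ d₄ d₁' d₃' heq₃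
  · refine betheEq4_inv N Δ e₄ e₃ h₄ h₃ d₂ ?_ ?_ d₂' ?_ heq₄
    · rwa [show 1 - 2*Δ*e₃ + e₄*e₃ = 1 - 2*Δ*e₃ + e₃*e₄ by ring]
    · rwa [show 1 - 2*Δ*e₄ + e₄*e₃ = 1 - 2*Δ*e₄ + e₃*e₄ by ring]
    · rwa [show 1 - 2*Δ*(1/e₃) + (1/e₄)*(1/e₃) = 1 - 2*Δ*(1/e₃) + (1/e₃)*(1/e₄) by ring]
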